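/- For a k-uniform hypergraph H without isolated vertices, the largest normalized Laplacian eigenvalue satisfies λ_1(H) ≤ k/(k-1). -/

import Mathlib

open Finset Matrix
open scoped RealInnerProductSpace

variable {n : ℕ}

def hdeg (E : Finset (Finset (Fin n))) (v : Fin n) : ℕ :=
  (E.filter fun e => v ∈ e).card

def codeg (E : Finset (Finset (Fin n))) (u v : Fin n) : ℕ :=
  (E.filter fun e => u ∈ e ∧ v ∈ e).card

noncomputable def adjMat (E : Finset (Finset (Fin n))) : Matrix (Fin n) (Fin n) ℝ :=
  fun u v => if u = v then 0
    else ∑ e ∈ E.filter (fun e => u ∈ e ∧ v ∈ e), (1 : ℝ) / ((e.card : ℝ) - 1)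

noncomputable def lapMat (E : Finset (Finset (Fin n))) : Matrix (Fin n) (Fin n) ℝ :=
  Matrix.diagonal (fun v => (hdeg E v : ℝ)) - adjMat E

noncomputable def normLap (E : Finset (Finset (Fin n))) : Matrix (Fin n) (Fin n) ℝ :=
  Matrix.diagonal (fun v => (hdeg E v : ℝ) ^ (-(1/2) : ℝ)) * lapMat E *
    Matrix.diagonal (fun v => (hdeg E v : ℝ) ^ (-(1/2) : ℝ))

noncomputable def eigsAsc (M : Matrix (Fin n) (Fin n) ℝ) : Fin n → ℝ :=
  if h : M.IsHermitian then (h.eigenvalues ∘ Tuple.sort h.eigenvalues) else 0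

noncomputable def lamMax {n : ℕ} (M : Matrix (Fin n) (Fin n) ℝ) : ℝ :=
  ⨆ i, eigsAsc M i

noncomputable def volR {n : ℕ} (E : Finset (Finset (Fin n))) (S : Finset (Fin n)) : ℝ :=
  ∑ v ∈ S, (hdeg E v : ℝ)

noncomputable def bndR {n : ℕ} (E : Finset (Finset (Fin n))) (S : Finset (Fin n)) : ℝ :=
  ∑ u ∈ S, ∑ v ∈ Sᶜ, (codeg E u v : ℝ)

lemma adj_symm (E : Finset (Finset (Fin n))) (u v : Fin n) :
    adjMat E u v = adjMat E v u := by
  have hf : E.filter (fun e => u ∈ e ∧ v ∈ e) = E.filter (fun e => v ∈ e ∧ u ∈ e) :=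
    Finset.filter_congr (fun e _ => and_comm)
  unfold adjMat
  rcases eq_or_ne u v with h | h
  · simp [h]
  · rw [if_neg h, if_neg h.symm, hf]

lemma codeg_self (E : Finset (Finset (Fin n))) (v : Fin n) :
    codeg E v v = hdeg E v := by
  have hf : E.filter (fun e => v ∈ e ∧ v ∈ e) = E.filter (fun e => v ∈ e) :=
    Finset.filter_congr (fun e _ => and_self_iff)
  unfold codeg hdeg
  rw [hf]

lemma sq_sum_eq (E : Finset (Finset (Fin n))) (y : Fin n → ℝ) :
    ∑ e ∈ E, (∑ v ∈ e, y v) ^ 2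
      = ∑ u, ∑ v, (codeg E u v : ℝ) * (y u * y v) := by
  have h1 : ∀ e ∈ E, (∑ v ∈ e, y v) ^ 2
      = ∑ u, ∑ v, (if u ∈ e ∧ v ∈ e then y u * y v else 0) := by
    intro e _
    rw [sq, Finset.sum_mul_sum]
    symm
    have step1 : ∀ u : Fin n, (∑ v, if u ∈ e ∧ v ∈ e then y u * y v else 0)
        = if u ∈ e then (∑ v ∈ e, y u * y v) else 0 := by
      intro u
      by_cases h : u ∈ e
      · simp only [h, true_and, if_true]
        rw [Finset.sum_ite_mem, Finset.univ_inter]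
      · simp [h]
    rw [Finset.sum_congr rfl (fun u _ => step1 u), Finset.sum_ite_mem, Finset.univ_inter]
  rw [Finset.sum_congr rfl h1, Finset.sum_comm]
  refine Finset.sum_congr rfl fun u _ => ?_
  rw [Finset.sum_comm]
  refine Finset.sum_congr rfl fun v _ => ?_
  unfold codeg
  rw [← Finset.sum_filter, Finset.sum_const, nsmul_eq_mul]

lemma quad_le (k : ℕ) (hk : 2 ≤ k) (E : Finset (Finset (Fin n)))
    (hunif : ∀ e ∈ E, e.card = k) (hiso : ∀ v : Fin n, 0 < hdeg E v) (x : Fin n → ℝ) :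
    x ⬝ᵥ (normLap E *ᵥ x) ≤ ((k : ℝ) / ((k : ℝ) - 1)) * (x ⬝ᵥ x) := by
  set d : Fin n → ℝ := fun v => (hdeg E v : ℝ) with hd_def
  have hd : ∀ v, 0 < d v := fun v => by simp only [hd_def]; exact_mod_cast hiso v
  set κ : ℝ := (k : ℝ) - 1 with hκ_def
  have hκ : 0 < κ := by
    have : (2 : ℝ) ≤ (k : ℝ) := by exact_mod_cast hk
    simp only [hκ_def]; linarith
  set y : Fin n → ℝ := fun v => d v ^ (-(1/2) : ℝ) * x v with hy_def
  -- step A : quadratic form of normLap equals quadratic form of lapMat at y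
  have stepA : x ⬝ᵥ (normLap E *ᵥ x) = ∑ u, ∑ v, y u * (lapMat E u v * y v) := by
    unfold normLap
    simp only [dotProduct, Matrix.mulVec, Matrix.mul_diagonal, Matrix.diagonal_mul,
      Finset.mul_sum]
    refine Finset.sum_congr rfl fun u _ => Finset.sum_congr rfl fun v _ => ?_
    simp only [hy_def]
    ring
  -- adjacency in terms of codegree
  have hA : ∀ u v : Fin n, adjMat E u v
      = if u = v then 0 else (codeg E u v : ℝ) / κ := by
    intro u v
    unfold adjMat
    by_cases h : u = v
    · simp [h]
    · rw [if_neg h, if_neg h]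
      have : ∀ e ∈ E.filter (fun e => u ∈ e ∧ v ∈ e), (1 : ℝ) / ((e.card : ℝ) - 1)
          = 1 / κ := by
        intro e he
        rw [hunif e (Finset.mem_filter.mp he).1]
      rw [Finset.sum_congr rfl this, Finset.sum_const, nsmul_eq_mul]
      unfold codeg
      rw [mul_one_div]
  set D2 : ℝ := ∑ v, d v * y v ^ 2 with hD2_def
  set S : ℝ := ∑ e ∈ E, (∑ v ∈ e, y v) ^ 2 with hS_def
  have hS : 0 ≤ S := Finset.sum_nonneg fun e _ => sq_nonneg _
  -- quadratic form of lapMat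
  have stepB : ∑ u, ∑ v, y u * (lapMat E u v * y v) = D2 - (S - D2) / κ := by
    have hterm : ∀ u v : Fin n, y u * (lapMat E u v * y v)
        = (if u = v then d u * y u ^ 2 else 0)
          - ((codeg E u v : ℝ) * (y u * y v) / κ
              - (if u = v then d u * y u ^ 2 / κ else 0)) := by
      intro u v
      unfold lapMat
      rw [Matrix.sub_apply, hA]
      by_cases h : u = v
      · subst h
        rw [Matrix.diagonal_apply_eq, if_pos rfl, if_pos rfl, if_pos rfl, codeg_self]
        ring
      · rw [Matrix.diagonal_apply_ne _ h, if_neg h, if_neg h, if_neg h]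
        ring
    rw [Finset.sum_congr rfl fun u _ => Finset.sum_congr rfl fun v _ => hterm u v]
    have e1 : ∑ u : Fin n, ∑ v : Fin n, (if u = v then d u * y u ^ 2 else 0) = D2 := by
      simp [Finset.sum_ite_eq, hD2_def]
    have e2 : ∑ u : Fin n, ∑ v : Fin n, (if u = v then d u * y u ^ 2 / κ else 0) = D2 / κ := by
      simp [Finset.sum_ite_eq, hD2_def, Finset.sum_div]
    have e3 : ∑ u : Fin n, ∑ v : Fin n, (codeg E u v : ℝ) * (y u * y v) / κ = S / κ := by
      rw [hS_def, sq_sum_eq, Finset.sum_div]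
      exact Finset.sum_congr rfl fun u _ => (Finset.sum_div _ _ _).symm
    simp only [Finset.sum_sub_distrib]
    rw [e1, e2, e3]
    ring
  -- D2 = x ⬝ᵥ x
  have stepC : D2 = x ⬝ᵥ x := by
    rw [hD2_def]
    refine Finset.sum_congr rfl fun v _ => ?_
    have h2 : (d v ^ (-(1/2) : ℝ)) ^ 2 = (d v)⁻¹ := by
      rw [sq, ← Real.rpow_add (hd v)]
      norm_num [Real.rpow_neg_one]
    simp only [hy_def, mul_pow, h2]
    rw [← mul_assoc, mul_inv_cancel₀ (hd v).ne', one_mul, sq]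
  calc x ⬝ᵥ (normLap E *ᵥ x) = D2 - (S - D2) / κ := by rw [stepA, stepB]
    _ = (κ + 1) / κ * D2 - S / κ := by field_simp; ring
    _ ≤ (κ + 1) / κ * D2 := by
        have : 0 ≤ S / κ := div_nonneg hS hκ.le
        linarith
    _ = ((k : ℝ) / ((k : ℝ) - 1)) * (x ⬝ᵥ x) := by
        rw [stepC, hκ_def]
        ring_nf

lemma normLap_herm (E : Finset (Finset (Fin n))) : (normLap E).IsHermitian := by
  have hL : ∀ a b : Fin n, lapMat E a b = lapMat E b a := by
    intro a b
    unfold lapMat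
    rw [Matrix.sub_apply, Matrix.sub_apply, adj_symm]
    congr 1
    rcases eq_or_ne a b with h | h
    · subst h; rfl
    · rw [Matrix.diagonal_apply_ne _ h, Matrix.diagonal_apply_ne _ (Ne.symm h)]
  refine Matrix.ext fun i j => ?_
  rw [Matrix.conjTranspose_apply, star_trivial]
  unfold normLap
  simp only [Matrix.mul_diagonal, Matrix.diagonal_mul, hL j i]
  ring

theorem stmt11 (n k : ℕ) (hk : 2 ≤ k) (E : Finset (Finset (Fin n)))
    (hunif : ∀ e ∈ E, e.card = k) (hiso : ∀ v : Fin n, 0 < hdeg E v) :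
    lamMax (normLap E) ≤ (k : ℝ) / ((k : ℝ) - 1) := by
  have hκ : (0 : ℝ) < (k : ℝ) - 1 := by
    have : (2 : ℝ) ≤ (k : ℝ) := by exact_mod_cast hk
    linarith
  have hc : (0 : ℝ) ≤ (k : ℝ) / ((k : ℝ) - 1) :=
    div_nonneg (Nat.cast_nonneg k) hκ.le
  have hherm := normLap_herm E
  -- every eigenvalue is at most the bound
  have hev : ∀ j : Fin n, hherm.eigenvalues j ≤ (k : ℝ) / ((k : ℝ) - 1) := by
    intro j
    have heq := hherm.eigenvalues_eq j
    set v : Fin n → ℝ := ⇑(hherm.eigenvectorBasis j) with hv_def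
    have hnorm : v ⬝ᵥ v = 1 := by
      have h1 : ‖hherm.eigenvectorBasis j‖ = 1 := hherm.eigenvectorBasis.orthonormal.1 j
      have h2 : ⟪hherm.eigenvectorBasis j, hherm.eigenvectorBasis j⟫ = v ⬝ᵥ v := by
        simp only [PiLp.inner_apply, RCLike.inner_apply, conj_trivial, dotProduct, hv_def, mul_comm]
      have h3 := real_inner_self_eq_norm_sq (hherm.eigenvectorBasis j)
      rw [h2] at h3
      rw [h3, h1]; norm_num
    have heq' : hherm.eigenvalues j = v ⬝ᵥ (normLap E *ᵥ v) := by
      simpa [star_trivial] using heq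
    rw [heq']
    calc v ⬝ᵥ (normLap E *ᵥ v) ≤ ((k : ℝ) / ((k : ℝ) - 1)) * (v ⬝ᵥ v) :=
          quad_le k hk E hunif hiso v
      _ = (k : ℝ) / ((k : ℝ) - 1) := by rw [hnorm, mul_one]
  unfold lamMax
  rcases Nat.eq_zero_or_pos n with hn | hn
  · subst hn
    rw [Real.iSup_of_isEmpty]
    exact hc
  · haveI : Nonempty (Fin n) := ⟨⟨0, hn⟩⟩
    apply ciSup_le
    intro i
    unfold eigsAsc
    rw [dif_pos hherm]
    exact hev _
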